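/- Let N be a Novikov algebra over a field K. For all a,b,x_1,...,x_t in N with t ≥ 1, one has a(bx_1⋯x_t) = (ab)x_1x_2⋯x_t − Σ_{i=1}^{t} (a,b,x_i)x_1⋯x_{i−1}x_{i+1}⋯x_t, where all iterated products are right-normed. -/

import Mathlib

namespace Stmt1

/-- The associator `(x,y,z) = (xy)z - x(yz)`. -/
def assoc {N : Type*} [NonUnitalNonAssocRing N] (x y z : N) : N := (x*y)*z - x*(y*z)

/-- The right-normed product `a x₁ x₂ ⋯ xₖ = (…((a x₁) x₂)…) xₖ`. -/
def rprod {N : Type*} [NonUnitalNonAssocRing N] (a : N) : List N → N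
  | [] => a
  | x :: xs => rprod (a * x) xs

lemma rprod_sub {N : Type*} [NonUnitalNonAssocRing N] (c d : N) (l : List N) :
    rprod (c - d) l = rprod c l - rprod d l := by
  induction l generalizing c d with
  | nil => rfl
  | cons x xs ih => simp only [rprod, sub_mul, ih]

lemma assoc_mul {N : Type*} [NonUnitalNonAssocRing N]
    (hls : ∀ x y z : N, assoc x y z = assoc y x z)
    (hrc : ∀ x y z : N, (x*y)*z = (x*z)*y)
    (a b x y : N) : assoc a (b*x) y = (assoc a b y) * x := by
  rw [hls a (b*x) y, hls a b y]
  simp only [assoc, sub_mul]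
  rw [hrc b x a, hrc (b*a) x y, hrc b x (a*y)]

lemma main {N : Type*} [NonUnitalNonAssocRing N]
    (hls : ∀ x y z : N, assoc x y z = assoc y x z)
    (hrc : ∀ x y z : N, (x*y)*z = (x*z)*y)
    (a : N) (l : List N) : ∀ b : N,
    a * rprod b l = rprod (a*b) l
      - ∑ i : Fin l.length, rprod (assoc a b (l.get i)) (l.eraseIdx i) := by
  induction l with
  | nil => intro b; simp [rprod]
  | cons x xs ih =>
    intro b
    have h1 : a * (b * x) = (a*b)*x - assoc a b x := by simp [assoc]
    calc a * rprod b (x :: xs) = a * rprod (b*x) xs := rfl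
      _ = rprod (a*(b*x)) xs
          - ∑ i : Fin xs.length, rprod (assoc a (b*x) (xs.get i)) (xs.eraseIdx i) := ih _
      _ = rprod ((a*b)*x) xs - rprod (assoc a b x) xs
          - ∑ i : Fin xs.length, rprod (assoc a b (xs.get i) * x) (xs.eraseIdx i) := by
          rw [h1, rprod_sub]
          congr 1
          exact Finset.sum_congr rfl fun i _ => by rw [assoc_mul hls hrc]
      _ = rprod (a*b) (x :: xs)
          - ∑ i : Fin (x :: xs).length,
              rprod (assoc a b ((x :: xs).get i)) ((x :: xs).eraseIdx i) := by
          simp only [List.length_cons]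
          rw [Fin.sum_univ_succ]
          simp only [List.get, List.eraseIdx, rprod, List.get_cons_zero, List.get_cons_succ', Fin.val_zero,
            Fin.val_succ, List.eraseIdx_cons_zero, List.eraseIdx_cons_succ]
          rw [sub_sub]

/-- In any Novikov algebra `N` over a field `K`, for `t ≥ 1`,
`a(bx₁⋯x_t) = (ab)x₁⋯x_t − Σᵢ (a,b,xᵢ)x₁⋯x_{i−1}x_{i+1}⋯x_t`. -/
theorem left_mul_formula (K N : Type*) [Field K] [NonUnitalNonAssocRing N] [Module K N]
    [SMulCommClass K N N] [IsScalarTower K N N]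
    (hls : ∀ x y z : N, assoc x y z = assoc y x z)
    (hrc : ∀ x y z : N, (x*y)*z = (x*z)*y)
    (t : ℕ) (ht : 1 ≤ t) (a b : N) (x : Fin t → N) :
    a * rprod b (List.ofFn x) =
      rprod (a*b) (List.ofFn x)
        - ∑ i : Fin t, rprod (assoc a b (x i)) ((List.ofFn x).eraseIdx i) := by
  rw [main hls hrc a (List.ofFn x) b]
  congr 1
  rw [← Fin.sum_congr' (fun i : Fin t => rprod (assoc a b (x i)) ((List.ofFn x).eraseIdx i))
    (List.length_ofFn (f := x))]
  refine Finset.sum_congr rfl fun i _ => ?_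
  simp [List.get_ofFn, Fin.cast]

end Stmt1
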